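/- Let V be a finite partial order in which, for every v ∈ V, the set of elements above v, {u ∈ V : v ≤ u}, is a chain (a rooted-forest order, with larger elements closer to the roots). Let M ⊆ V be a set of marked elements and let λ ≥ 1. A λ-packing is a family 𝓑 of pairwise disjoint subsets of V such that every B ∈ 𝓑 is an order interval B = Icc(x_B, y_B) for some x_B ≤ y_B with x_B ∈ M and y_B ∈ M, and B contains exactly λ marked elements. 𝓑 is maximal if there is no interval B' = Icc(x', y') with x' ≤ y', x', y' ∈ M, containing exactly λ marked elements, and disjoint from every member of 𝓑. Theorem: if 𝓑 is a maximal λ-packing, then for every v ∈ V the set { u ∈ M : v ≤ u and Icc(v, u) ∩ ⋃𝓑 = ∅ } has fewer than λ elements. (This maximality property is what guarantees that the jump-query algorithm of Lemma 4 reaches a packing path after fewer than λ lowest-marked-ancestor steps.) -/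

import Mathlib

theorem maximal_packing_few_unpacked_marked_ancestors
    {V : Type*} [Fintype V] [PartialOrder V]
    (hforest : ∀ v : V, IsChain (· ≤ ·) {u : V | v ≤ u})
    (M : Set V) (lam : ℕ) (hlam : 1 ≤ lam) (𝓑 : Set (Set V))
    (hdisj : 𝓑.Pairwise Disjoint)
    (hintervals : ∀ B ∈ 𝓑, ∃ x y : V, x ≤ y ∧ x ∈ M ∧ y ∈ M ∧ B = Set.Icc x y ∧
      (B ∩ M).ncard = lam)
    (hmax : ¬∃ x y : V, x ≤ y ∧ x ∈ M ∧ y ∈ M ∧ (Set.Icc x y ∩ M).ncard = lam ∧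
      ∀ B ∈ 𝓑, Disjoint (Set.Icc x y) B) :
    ∀ v : V, {u : V | u ∈ M ∧ v ≤ u ∧ Set.Icc v u ∩ ⋃₀ 𝓑 = ∅}.ncard < lam := by
  classical
  intro v
  by_contra hcon
  push_neg at hcon
  set S : Set V := {u : V | u ∈ M ∧ v ≤ u ∧ Set.Icc v u ∩ ⋃₀ 𝓑 = ∅} with hSdef
  have hSfin : S.Finite := Set.toFinite S
  have hchain : IsChain (· ≤ ·) S := (hforest v).mono (fun u hu => hu.2.1)
  have hSne : S.Nonempty := by
    rw [Set.nonempty_iff_ne_empty]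
    intro h
    rw [h, Set.ncard_empty] at hcon
    omega
  -- maximal element of S is a top of S
  obtain ⟨m, hmS, hmmax⟩ := Set.Finite.exists_maximalFor id S hSfin hSne
  have hmtop : ∀ w ∈ S, w ≤ m := by
    intro w hw
    rcases eq_or_ne w m with rfl | hne
    · exact le_refl w
    · rcases hchain hw hmS hne with h | h
      · exact h
      · exact (hne (le_antisymm (hmmax hw h) h)).elim
  -- minimal element of S is a bottom of S
  obtain ⟨x, hxS, hxmin⟩ := Set.Finite.exists_minimalFor id S hSfin hSne
  have hxbot : ∀ w ∈ S, x ≤ w := by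
    intro w hw
    rcases eq_or_ne w x with rfl | hne
    · exact le_refl w
    · rcases hchain hw hxS hne with h | h
      · exact ((hne (le_antisymm h (hxmin hw h))).elim)
      · exact h
  -- the set A of elements y of S with at least lam elements of S below
  set A : Set V := {w ∈ S | lam ≤ (S ∩ Set.Iic w).ncard} with hAdef
  have hAne : A.Nonempty := by
    refine ⟨m, hmS, ?_⟩
    have : S ∩ Set.Iic m = S := by
      apply Set.inter_eq_self_of_subset_left
      intro w hw; exact hmtop w hw
    rw [this]; exact hcon
  have hAfin : A.Finite := Set.toFinite A
  obtain ⟨y, hyA, hymin⟩ := Set.Finite.exists_minimalFor id A hAfin hAne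
  obtain ⟨hyS, hycard⟩ := hyA
  -- claim: (S ∩ Iic y).ncard = lam
  have hcard : (S ∩ Set.Iic y).ncard = lam := by
    by_contra hne
    have hgt : lam + 1 ≤ (S ∩ Set.Iic y).ncard := by omega
    have hsplit : S ∩ Set.Iic y = insert y (S ∩ Set.Iio y) := by
      ext w
      simp only [Set.mem_inter_iff, Set.mem_Iic, Set.mem_Iio, Set.mem_insert_iff]
      constructor
      · rintro ⟨hwS, hwy⟩
        rcases eq_or_ne w y with rfl | hwne
        · exact Or.inl rfl
        · exact Or.inr ⟨hwS, lt_of_le_of_ne hwy hwne⟩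
      · rintro (rfl | ⟨hwS, hwy⟩)
        · exact ⟨hyS, le_refl _⟩
        · exact ⟨hwS, le_of_lt hwy⟩
    have hIiofin : (S ∩ Set.Iio y).Finite := Set.toFinite _
    have hynotin : y ∉ S ∩ Set.Iio y := by
      intro h; exact absurd h.2 (lt_irrefl y)
    have hcardIio : lam ≤ (S ∩ Set.Iio y).ncard := by
      have := Set.ncard_insert_of_notMem hynotin hIiofin
      rw [hsplit, this] at hgt
      omega
    have hIione : (S ∩ Set.Iio y).Nonempty := by
      rw [Set.nonempty_iff_ne_empty]
      intro h
      rw [h, Set.ncard_empty] at hcardIio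
      omega
    obtain ⟨z, hzIio, hzmax⟩ := Set.Finite.exists_maximalFor id _ hIiofin hIione
    have hztop : ∀ w ∈ S ∩ Set.Iio y, w ≤ z := by
      intro w hw
      rcases eq_or_ne w z with rfl | hne
      · exact le_refl w
      · rcases hchain hw.1 hzIio.1 hne with h | h
        · exact h
        · exact (hne (le_antisymm (hzmax hw h) h)).elim
    have hzA : z ∈ A := by
      refine ⟨hzIio.1, le_trans hcardIio ?_⟩
      apply Set.ncard_le_ncard _ (Set.toFinite _)
      intro w hw
      exact ⟨hw.1, hztop w hw⟩
    have : y = z := le_antisymm (hymin hzA (le_of_lt hzIio.2)) (le_of_lt hzIio.2)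
    exact absurd hzIio.2 (this ▸ lt_irrefl y)
  -- now build the contradicting interval
  apply hmax
  refine ⟨x, y, hxbot y hyS, hxS.1, hyS.1, ?_, ?_⟩
  · have heq : Set.Icc x y ∩ M = S ∩ Set.Iic y := by
      ext w
      simp only [Set.mem_inter_iff, Set.mem_Icc, Set.mem_Iic]
      constructor
      · rintro ⟨⟨hxw, hwy⟩, hwM⟩
        refine ⟨⟨hwM, le_trans hxS.2.1 hxw, ?_⟩, hwy⟩
        have hsub : Set.Icc v w ⊆ Set.Icc v y := by
          intro z hz
          exact ⟨hz.1, le_trans hz.2 hwy⟩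
        have := hyS.2.2
        apply Set.eq_empty_of_subset_empty
        calc Set.Icc v w ∩ ⋃₀ 𝓑 ⊆ Set.Icc v y ∩ ⋃₀ 𝓑 :=
              Set.inter_subset_inter_left _ hsub
          _ = ∅ := this
      · rintro ⟨hwS, hwy⟩
        exact ⟨⟨hxbot w hwS, hwy⟩, hwS.1⟩
    rw [heq, hcard]
  · intro B hB
    rw [Set.disjoint_iff_inter_eq_empty]
    apply Set.eq_empty_of_subset_empty
    have hsub : Set.Icc x y ⊆ Set.Icc v y := by
      intro z hz
      exact ⟨le_trans hxS.2.1 hz.1, hz.2⟩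
    calc Set.Icc x y ∩ B ⊆ Set.Icc v y ∩ ⋃₀ 𝓑 :=
          Set.inter_subset_inter hsub (Set.subset_sUnion_of_mem hB)
      _ = ∅ := hyS.2.2
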